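/- arXiv:1406.0169 — 2 statements merged into one kernel-verified Lean document; each statement's English description precedes it below -/
import Mathlib

section
/- Define, for p ∈ ℝ³ and unit ω ∈ ℝ³, the vectors H_T^E(ω,p) with components H_T^E(ω,p)_i = −(ω_i + p̂_i)(1 − |p̂|²)/(1 + p̂·ω)² and H_T^B(ω,p) = (ω × p̂)(1 − |p̂|²)/(1 + p̂·ω)². Then for all p and all unit ω, |H_T^E(ω,p)| ≤ √2 / (p₀² (1 + p̂·ω)^{3/2}) and |H_T^B(ω,p)| ≤ √2 / (p₀² (1 + p̂·ω)^{3/2}), where |·| is the Euclidean norm. -/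
noncomputable section

open Real MeasureTheory
open scoped RealInnerProductSpace

abbrev E3 : Type := EuclideanSpace ℝ (Fin 3)

def p0 (p : E3) : ℝ := Real.sqrt (1 + ‖p‖ ^ 2)

def phat (p : E3) : E3 := (p0 p)⁻¹ • p

def cross3 (a b : E3) : E3 :=
  (WithLp.equiv 2 (Fin 3 → ℝ)).symm
    ![a 1 * b 2 - a 2 * b 1, a 2 * b 0 - a 0 * b 2, a 0 * b 1 - a 1 * b 0]

def HTE (ω p : E3) : E3 :=
  (-((1 - ‖phat p‖ ^ 2) / (1 + ⟪phat p, ω⟫) ^ 2)) • (ω + phat p)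

def HTB (ω p : E3) : E3 :=
  ((1 - ‖phat p‖ ^ 2) / (1 + ⟪phat p, ω⟫) ^ 2) • cross3 ω (phat p)

lemma cross3_norm_sq (a b : E3) :
    ‖cross3 a b‖ ^ 2 = ‖a‖ ^ 2 * ‖b‖ ^ 2 - ⟪a, b⟫ ^ 2 := by
  rw [← real_inner_self_eq_norm_sq, ← real_inner_self_eq_norm_sq,
    ← real_inner_self_eq_norm_sq]
  simp only [cross3, PiLp.inner_apply, RCLike.inner_apply, conj_trivial,
    Fin.sum_univ_three, WithLp.equiv_symm_apply, PiLp.toLp_apply, Matrix.cons_val_zero,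
    Matrix.cons_val_one, Matrix.head_cons, Matrix.cons_val_two, Matrix.tail_cons]
  ring

/-- For all `p` and all unit `ω`, `|H_T^E(ω,p)| ≤ √2 / (p₀² (1 + p̂·ω)^{3/2})` and
`|H_T^B(ω,p)| ≤ √2 / (p₀² (1 + p̂·ω)^{3/2})`. -/
theorem stmt2 (p ω : E3) (hω : ‖ω‖ = 1) :
    ‖HTE ω p‖ ≤ Real.sqrt 2 / ((p0 p) ^ 2 * (1 + ⟪phat p, ω⟫) ^ ((3 : ℝ) / 2)) ∧
    ‖HTB ω p‖ ≤ Real.sqrt 2 / ((p0 p) ^ 2 * (1 + ⟪phat p, ω⟫) ^ ((3 : ℝ) / 2)) := by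
  have hp0pos : 0 < p0 p := Real.sqrt_pos.mpr (by positivity)
  have hp0sq : (p0 p) ^ 2 = 1 + ‖p‖ ^ 2 := Real.sq_sqrt (by positivity)
  have hrsq : ‖phat p‖ ^ 2 = ‖p‖ ^ 2 / (p0 p) ^ 2 := by
    rw [phat, norm_smul, norm_inv, Real.norm_eq_abs, abs_of_pos hp0pos]
    field_simp
  have hone : 1 - ‖phat p‖ ^ 2 = ((p0 p) ^ 2)⁻¹ := by
    rw [hrsq, hp0sq]
    have h1 : (0:ℝ) < 1 + ‖p‖ ^ 2 := by positivity
    field_simp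
    ring
  have hrlt : ‖phat p‖ ^ 2 < 1 := by
    rw [hrsq, hp0sq]
    rw [div_lt_one (by positivity)]
    linarith
  have hc : |⟪phat p, ω⟫| ≤ ‖phat p‖ := by
    have := abs_real_inner_le_norm (phat p) ω
    rwa [hω, mul_one] at this
  have hcs : ⟪phat p, ω⟫ ^ 2 ≤ ‖phat p‖ ^ 2 := by
    rw [← sq_abs]; exact pow_le_pow_left₀ (abs_nonneg _) hc 2
  set c := ⟪phat p, ω⟫ with hcdef
  set t := 1 + c with htdef
  have ht : 0 < t := by
    have : c ^ 2 < 1 := lt_of_le_of_lt hcs hrlt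
    nlinarith
  have hst : Real.sqrt t * t ^ ((3:ℝ)/2) = t ^ 2 := by
    have h32 : t ^ ((3:ℝ)/2) = t * Real.sqrt t := by
      rw [show (3:ℝ)/2 = 1 + 1/2 by norm_num, Real.rpow_add ht, Real.rpow_one,
        ← Real.sqrt_eq_rpow]
    rw [h32]
    have := Real.mul_self_sqrt ht.le
    nlinarith
  have heq : Real.sqrt 2 / ((p0 p) ^ 2 * t ^ ((3:ℝ)/2))
      = Real.sqrt 2 * Real.sqrt t / ((p0 p) ^ 2 * t ^ 2) := by
    rw [div_eq_div_iff (by positivity) (by positivity), ← hst]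
    ring
  have main : ∀ v : E3, ‖v‖ ^ 2 ≤ 2 * t →
      (1 - ‖phat p‖ ^ 2) / t ^ 2 * ‖v‖
        ≤ Real.sqrt 2 / ((p0 p) ^ 2 * t ^ ((3:ℝ)/2)) := by
    intro v hv
    rw [heq, hone]
    have hvle : ‖v‖ ≤ Real.sqrt 2 * Real.sqrt t := by
      rw [← Real.sqrt_mul (by norm_num) t]
      calc ‖v‖ = Real.sqrt (‖v‖ ^ 2) := by rw [Real.sqrt_sq (norm_nonneg v)]
        _ ≤ Real.sqrt (2 * t) := Real.sqrt_le_sqrt hv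
    have hL : ((p0 p) ^ 2)⁻¹ / t ^ 2 * ‖v‖ = ‖v‖ / ((p0 p) ^ 2 * t ^ 2) := by
      field_simp
    rw [hL]
    gcongr
  constructor
  · have hnorm : ‖HTE ω p‖ = (1 - ‖phat p‖ ^ 2) / t ^ 2 * ‖ω + phat p‖ := by
      rw [HTE, norm_smul, Real.norm_eq_abs, abs_neg, abs_div, abs_of_nonneg (by nlinarith),
        abs_of_nonneg (by positivity)]
    rw [hnorm]
    apply main
    have := norm_add_sq_real ω (phat p)
    rw [hω] at this
    have hcomm : ⟪ω, phat p⟫ = c := (real_inner_comm ω (phat p)).symm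
    nlinarith [this]
  · have hnorm : ‖HTB ω p‖ = (1 - ‖phat p‖ ^ 2) / t ^ 2 * ‖cross3 ω (phat p)‖ := by
      rw [HTB, norm_smul, Real.norm_eq_abs, abs_div, abs_of_nonneg (by nlinarith),
        abs_of_nonneg (by positivity)]
    rw [hnorm]
    apply main
    have hx := cross3_norm_sq ω (phat p)
    rw [hω] at hx
    have hcomm : ⟪ω, phat p⟫ = c := (real_inner_comm ω (phat p)).symm
    rw [hcomm] at hx
    nlinarith [hx, hrlt, sq_nonneg (1 + c)]
end
end

section
/- Fix x ∈ ℝ³ and p ∈ ℝ³, and for y ∈ ℝ³ with y ≠ x set ω(y) = (x − y)/|x − y| and φ(y) = 1/(1 + p̂·ω(y)). There is an absolute constant C such that for all such y: |∇_y φ(y)| ≤ C / ( |x − y| (1 + p̂·ω(y))^{3/2} ) and |p̂ · ∇_y φ(y)| ≤ C / ( |x − y| (1 + p̂·ω(y)) ). -/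
set_option maxHeartbeats 1000000


noncomputable section

open Real MeasureTheory
open scoped RealInnerProductSpace

lemma hasFDerivAt_norm' (v : E3) (hv : v ≠ 0) :
    HasFDerivAt (fun z : E3 => ‖z‖) (innerSL ℝ (‖v‖⁻¹ • v)) v := by
  have h0 : (0:ℝ) < ‖v‖ := norm_pos_iff.mpr hv
  have hsq : HasFDerivAt (fun z : E3 => ‖z‖ ^ 2) (2 • innerSL ℝ v) v :=
    (hasStrictFDerivAt_norm_sq v).hasFDerivAt
  have hne : ‖v‖ ^ 2 ≠ 0 := by positivity
  have := hsq.sqrt hne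
  have heq : (fun z : E3 => √(‖z‖ ^ 2)) = fun z : E3 => ‖z‖ := by
    funext z; rw [Real.sqrt_sq (norm_nonneg z)]
  rw [heq] at this
  refine this.congr_fderiv ?_
  ext w
  simp [Real.sqrt_sq (norm_nonneg v), real_inner_smul_left, smul_smul]
  field_simp

lemma norm_phat_lt_one (p : E3) : ‖phat p‖ < 1 := by
  have h1 : (0:ℝ) < p0 p := Real.sqrt_pos.mpr (by positivity)
  have hsq : p0 p ^ 2 = 1 + ‖p‖ ^ 2 := Real.sq_sqrt (by positivity)
  have h2 : ‖p‖ < p0 p := by nlinarith [norm_nonneg p]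
  rw [phat, norm_smul, norm_inv, Real.norm_of_nonneg h1.le]
  rw [inv_mul_lt_iff₀ h1, mul_one]
  exact h2

lemma main_deriv (x p y : E3) (hy : y ≠ x) :
    HasFDerivAt (fun z : E3 => (1 + ⟪phat p, ‖x - z‖⁻¹ • (x - z)⟫)⁻¹)
      ((‖x - y‖ * (1 + ⟪phat p, ‖x - y‖⁻¹ • (x - y)⟫) ^ 2)⁻¹ •
        innerSL ℝ (phat p - ⟪phat p, ‖x - y‖⁻¹ • (x - y)⟫ • (‖x - y‖⁻¹ • (x - y)))) y := by
  have hv : x - y ≠ 0 := sub_ne_zero.mpr (Ne.symm hy)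
  have hr : (0:ℝ) < ‖x - y‖ := norm_pos_iff.mpr hv
  set r : ℝ := ‖x - y‖ with hrdef
  have hA : HasFDerivAt (fun z : E3 => x - z) (-(ContinuousLinearMap.id ℝ E3)) y :=
    (hasFDerivAt_id y).const_sub x
  have hB : HasFDerivAt (fun z : E3 => ‖x - z‖)
      (-(innerSL ℝ (r⁻¹ • (x - y)))) y := by
    have := (hasFDerivAt_norm' (x - y) hv).comp y hA
    refine this.congr_fderiv ?_
    ext w; simp [hrdef]
  have hC : HasFDerivAt (fun z : E3 => ⟪phat p, x - z⟫)
      (-(innerSL ℝ (phat p))) y := by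
    have h1 : HasFDerivAt (fun z : E3 => ⟪phat p, z⟫) (innerSL ℝ (phat p)) (x - y) :=
      (innerSL ℝ (phat p)).hasFDerivAt
    have := h1.comp y hA
    refine this.congr_fderiv ?_
    ext w; simp
  have hD : HasFDerivAt (fun z : E3 => ‖x - z‖⁻¹)
      ((-(r ^ 2)⁻¹ : ℝ) • -(innerSL ℝ (r⁻¹ • (x - y)))) y :=
    (hasDerivAt_inv hr.ne').comp_hasFDerivAt y hB
  have hE := hD.mul hC
  have hF := hE.const_add (1 : ℝ)
  have hpos : (0:ℝ) < 1 + r⁻¹ * ⟪phat p, x - y⟫ := by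
    have hcs : |⟪phat p, r⁻¹ • (x - y)⟫| ≤ ‖phat p‖ * ‖r⁻¹ • (x - y)‖ :=
      abs_real_inner_le_norm _ _
    have hω : ‖r⁻¹ • (x - y)‖ = 1 := by
      rw [norm_smul, norm_inv, Real.norm_of_nonneg hr.le, inv_mul_cancel₀ hr.ne']
    rw [hω, mul_one, real_inner_smul_right] at hcs
    have := norm_phat_lt_one p
    cases' abs_le.mp hcs with h1 h2
    nlinarith
  have hG := (hasDerivAt_inv hpos.ne').comp_hasFDerivAt y hF
  have hfun : (fun z : E3 => (1 + ⟪phat p, ‖x - z‖⁻¹ • (x - z)⟫)⁻¹)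
      = fun z : E3 => (1 + ‖x - z‖⁻¹ * ⟪phat p, x - z⟫)⁻¹ := by
    funext z; rw [real_inner_smul_right]
  rw [hfun]
  refine hG.congr_fderiv ?_
  ext w
  have hinner : ⟪phat p, r⁻¹ • (x - y)⟫ = r⁻¹ * ⟪phat p, x - y⟫ :=
    real_inner_smul_right _ _ _
  simp only [ContinuousLinearMap.smul_apply, innerSL_apply_apply, ContinuousLinearMap.add_apply,
    ContinuousLinearMap.neg_apply, smul_eq_mul, ContinuousLinearMap.coe_smul',
    Pi.smul_apply, inner_sub_left, real_inner_smul_left, hinner]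
  generalize hg : (⟪phat p, x - y⟫ : ℝ) = g
  rw [hg] at hpos
  generalize (⟪phat p, w⟫ : ℝ) = a
  generalize (⟪x, w⟫ : ℝ) = b1
  generalize (⟪y, w⟫ : ℝ) = b2
  rw [← hrdef]
  have hgr : (0:ℝ) < r + g := by
    have h3 : r * (1 + r⁻¹ * g) = r + g := by field_simp
    nlinarith [mul_pos hr hpos]
  have hone : 1 + r⁻¹ * g = (r + g) / r := by field_simp
  rw [hone]
  field_simp
  ring



/-- Fix `x, p ∈ ℝ³` and set `ω(y) = (x − y)/|x − y|`, `φ(y) = 1/(1 + p̂·ω(y))` for `y ≠ x`.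
There is an absolute constant `C` such that for all such `y` (where `φ` is differentiable):
`|∇_y φ(y)| ≤ C/(|x − y| (1 + p̂·ω(y))^{3/2})` and
`|p̂·∇_y φ(y)| ≤ C/(|x − y| (1 + p̂·ω(y)))`. -/
theorem stmt5 :
    ∃ C : ℝ, 0 < C ∧ ∀ (x p y : E3), y ≠ x →
      DifferentiableAt ℝ
        (fun z : E3 => (1 + ⟪phat p, ‖x - z‖⁻¹ • (x - z)⟫)⁻¹) y ∧
      ‖fderiv ℝ (fun z : E3 => (1 + ⟪phat p, ‖x - z‖⁻¹ • (x - z)⟫)⁻¹) y‖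
          ≤ C / (‖x - y‖ * (1 + ⟪phat p, ‖x - y‖⁻¹ • (x - y)⟫) ^ ((3 : ℝ) / 2)) ∧
      |fderiv ℝ (fun z : E3 => (1 + ⟪phat p, ‖x - z‖⁻¹ • (x - z)⟫)⁻¹) y (phat p)|
          ≤ C / (‖x - y‖ * (1 + ⟪phat p, ‖x - y‖⁻¹ • (x - y)⟫)) := by
  refine ⟨2, by norm_num, fun x p y hy => ?_⟩
  have hL := main_deriv x p y hy
  have hv : x - y ≠ 0 := sub_ne_zero.mpr (Ne.symm hy)
  have hr : (0:ℝ) < ‖x - y‖ := norm_pos_iff.mpr hv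
  set r : ℝ := ‖x - y‖ with hrdef
  set ω : E3 := r⁻¹ • (x - y) with hωdef
  set c : ℝ := ⟪phat p, ω⟫ with hcdef
  have hω : ‖ω‖ = 1 := by
    rw [hωdef, norm_smul, norm_inv, Real.norm_of_nonneg hr.le, inv_mul_cancel₀ hr.ne']
  have hp1 : ‖phat p‖ < 1 := norm_phat_lt_one p
  have hcabs : |c| ≤ ‖phat p‖ := by
    have := abs_real_inner_le_norm (phat p) ω
    rwa [hω, mul_one] at this
  obtain ⟨hc1, hc2⟩ := abs_le.mp hcabs
  have hf : (0:ℝ) < 1 + c := by nlinarith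
  set f : ℝ := 1 + c with hfdef
  -- norm squared of phat p - c • ω
  have hn2 : ‖phat p - c • ω‖ ^ 2 = ‖phat p‖ ^ 2 - c ^ 2 := by
    rw [@norm_sub_sq_real, real_inner_smul_right, norm_smul, hω, ← hcdef]
    simp [Real.norm_eq_abs, sq_abs]
    ring
  have hn2le : ‖phat p - c • ω‖ ^ 2 ≤ 2 * f := by
    rw [hn2, hfdef]; nlinarith
  have hnle : ‖phat p - c • ω‖ ≤ 2 * √f := by
    have hs := Real.sq_sqrt hf.le
    have hs0 := Real.sqrt_nonneg f
    have hn0 := norm_nonneg (phat p - c • ω)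
    nlinarith [sq_nonneg (‖phat p - c • ω‖ - 2 * √f)]
  have hfpow : (0:ℝ) < f ^ ((3:ℝ)/2) := Real.rpow_pos_of_pos hf _
  have key : f ^ ((3:ℝ)/2) * √f = f ^ 2 := by
    rw [Real.sqrt_eq_rpow, ← Real.rpow_add hf, ← Real.rpow_natCast f 2]
    norm_num
  refine ⟨hL.differentiableAt, ?_, ?_⟩
  · rw [hL.fderiv]
    rw [norm_smul, innerSL_apply_norm, Real.norm_eq_abs,
      abs_of_nonneg (by positivity : (0:ℝ) ≤ (r * f ^ 2)⁻¹)]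
    calc (r * f ^ 2)⁻¹ * ‖phat p - c • ω‖ ≤ (r * f ^ 2)⁻¹ * (2 * √f) := by
          gcongr
      _ = 2 * √f / (r * f ^ 2) := by ring
      _ = 2 / (r * f ^ ((3:ℝ)/2)) := by
          rw [div_eq_div_iff (by positivity) (by positivity)]
          linear_combination (2 * r) * key
  · rw [hL.fderiv]
    have happ : ((r * f ^ 2)⁻¹ • innerSL ℝ (phat p - c • ω)) (phat p)
        = (r * f ^ 2)⁻¹ * (‖phat p‖ ^ 2 - c ^ 2) := by
      simp only [ContinuousLinearMap.smul_apply, innerSL_apply_apply, smul_eq_mul,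
        inner_sub_left, real_inner_smul_left]
      rw [real_inner_self_eq_norm_sq,
        show (inner ℝ ω (phat p) : ℝ) = c from (real_inner_comm _ _).trans hcdef.symm]
      ring
    have hsub : (0:ℝ) ≤ ‖phat p‖ ^ 2 - c ^ 2 := by nlinarith
    rw [happ, abs_of_nonneg (mul_nonneg (by positivity) hsub)]
    calc (r * f ^ 2)⁻¹ * (‖phat p‖ ^ 2 - c ^ 2) ≤ (r * f ^ 2)⁻¹ * (2 * f) :=
          mul_le_mul_of_nonneg_left (by nlinarith) (by positivity)
      _ = 2 / (r * f) := by field_simp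
end
end
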